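/- Let f ∈ V, assume G ≠ 0, let 0 < α* < 2/‖G*G‖, and let ū ∈ H be any solution of the discretized equation G ū = T* f (such solutions exist since T* f lies in the range of G). Then P ū = α*·Σ_{n=0}^∞ (Id − α*·G*G)ⁿ (G*(T* f)), the series converging in H. -/

import Mathlib

open scoped RealInnerProductSpace
open ContinuousLinearMap Filter Finset

private lemma pos_op_cauchy_schwarz {H : Type*} [NormedAddCommGroup H] [InnerProductSpace ℝ H]
    (A : H →L[ℝ] H) (hsymm : ∀ x y : H, ⟪A x, y⟫ = ⟪x, A y⟫)
    (hpos : ∀ x : H, 0 ≤ ⟪A x, x⟫) (x y : H) :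
    ⟪A x, y⟫ ^ 2 ≤ ⟪A x, x⟫ * ⟪A y, y⟫ := by
  have h : ∀ t : ℝ, 0 ≤ ⟪A y, y⟫ * (t * t) + (2 * ⟪A x, y⟫) * t + ⟪A x, x⟫ := by
    intro t
    have expand : ⟪A (x + t • y), x + t • y⟫
        = ⟪A y, y⟫ * (t * t) + (2 * ⟪A x, y⟫) * t + ⟪A x, x⟫ := by
      have h1 : ⟪A y, x⟫ = ⟪A x, y⟫ := by
        rw [hsymm y x, real_inner_comm]
      simp only [map_add, map_smul, inner_add_left, inner_add_right, inner_smul_left,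
        inner_smul_right, RCLike.ofReal_real_eq_id, id_eq, starRingEnd_apply, star_trivial]
      rw [h1]
      ring
    rw [← expand]; exact hpos _
  have hd := discrim_le_zero h
  rw [discrim] at hd
  nlinarith [hd]

set_option maxHeartbeats 1000000 in
theorem projection_of_solution_as_neumann_series
    {V H : Type*} [NormedAddCommGroup V] [InnerProductSpace ℝ V] [CompleteSpace V]
    [NormedAddCommGroup H] [InnerProductSpace ℝ H] [CompleteSpace H]
    (B : V →L[ℝ] V) (α : ℝ) (hα : 0 < α)
    (hB : ∀ v : V, α * ‖v‖ ^ 2 ≤ ⟪B v, v⟫)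
    (T : H →L[ℝ] V) (hT : Function.Surjective T)
    (G : H →L[ℝ] H) (hG : G = (ContinuousLinearMap.adjoint T).comp (B.comp T))
    (G₂ : H →L[ℝ] H) (hG₂ : G₂ = (ContinuousLinearMap.adjoint G).comp G)
    (P : H →L[ℝ] H)
    (hP : ∀ x : H, P x ∈ (LinearMap.ker (T : H →ₗ[ℝ] V))ᗮ ∧ x - P x ∈ LinearMap.ker (T : H →ₗ[ℝ] V))
    (hGne : G ≠ 0)
    (αs : ℝ) (hαs : 0 < αs) (hαs' : αs < 2 / ‖G₂‖)
    (f : V) (ubar : H) (hubar : G ubar = ContinuousLinearMap.adjoint T f) :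
    HasSum
      (fun n : ℕ => αs • (((ContinuousLinearMap.id ℝ H - αs • G₂) ^ n)
        (ContinuousLinearMap.adjoint G (ContinuousLinearMap.adjoint T f))))
      (P ubar) := by
  classical
  set K : Submodule ℝ H := (LinearMap.ker (T : H →ₗ[ℝ] V))ᗮ with hK
  set S : H →L[ℝ] H := ContinuousLinearMap.id ℝ H - αs • G₂ with hSdef
  set p : H := P ubar with hpdef
  -- ‖G₂‖ > 0 and αs‖G₂‖ < 2
  have hG₂pos : 0 < ‖G₂‖ := by
    rcases (norm_nonneg G₂).eq_or_lt with h | h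
    · exfalso; rw [← h, div_zero] at hαs'; linarith
    · exact h
  have hαs2 : αs * ‖G₂‖ < 2 := (lt_div_iff₀ hG₂pos).mp hαs'
  -- inner product identities
  have hGinner : ∀ x y : H, ⟪G x, y⟫ = ⟪B (T x), T y⟫ := by
    intro x y
    rw [hG]
    simp only [coe_comp', Function.comp_apply]
    exact ContinuousLinearMap.adjoint_inner_left T y (B (T x))
  have hG₂inner : ∀ x y : H, ⟪G₂ x, y⟫ = ⟪G x, G y⟫ := by
    intro x y
    rw [hG₂]
    simp only [coe_comp', Function.comp_apply]
    exact ContinuousLinearMap.adjoint_inner_left G y (G x)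
  have hsymm : ∀ x y : H, ⟪G₂ x, y⟫ = ⟪x, G₂ y⟫ := by
    intro x y
    rw [hG₂inner x y]
    conv_rhs => rw [real_inner_comm, hG₂inner y x]
    exact real_inner_comm _ _
  have hpos : ∀ x : H, 0 ≤ ⟪G₂ x, x⟫ := by
    intro x
    rw [hG₂inner]
    exact real_inner_self_nonneg
  have hG₂sq : ∀ x : H, ⟪G₂ x, x⟫ = ‖G x‖ ^ 2 := by
    intro x; rw [hG₂inner, real_inner_self_eq_norm_sq]
  -- kernel facts
  have hkerG : ∀ x : H, T x = 0 → G x = 0 := by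
    intro x hx
    rw [hG]; simp [hx]
  have hkerG₂ : ∀ x : H, T x = 0 → G₂ x = 0 := by
    intro x hx
    rw [hG₂]; simp [hkerG x hx]
  -- T is bounded below on K
  obtain ⟨C, hCpos, hC⟩ := T.exists_preimage_norm_le hT
  have hTlow : ∀ x : H, x ∈ K → ‖x‖ ≤ C * ‖T x‖ := by
    intro x hx
    obtain ⟨y, hy, hyn⟩ := hC (T x)
    have hxy : x - y ∈ LinearMap.ker (T : H →ₗ[ℝ] V) := by
      simp [LinearMap.mem_ker, map_sub, hy]
    have h0 : ⟪x - y, x⟫ = 0 := hx (x - y) hxy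
    have hxx : ‖x‖ ^ 2 = ⟪y, x⟫ := by
      rw [inner_sub_left] at h0
      rw [← real_inner_self_eq_norm_sq]
      linarith
    have hyx : ⟪y, x⟫ ≤ ‖y‖ * ‖x‖ := real_inner_le_norm y x
    rcases (norm_nonneg x).eq_or_lt with h | h
    · rw [← h]; positivity
    · have hxley : ‖x‖ ≤ ‖y‖ := by nlinarith
      calc ‖x‖ ≤ ‖y‖ := hxley
        _ ≤ C * ‖T x‖ := hyn
  -- coercivity of G₂ on K
  set β : ℝ := (α / C ^ 2) ^ 2 with hβdef
  have hβpos : 0 < β := by positivity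
  have hGlow : ∀ x : H, x ∈ K → (α / C ^ 2) * ‖x‖ ≤ ‖G x‖ := by
    intro x hx
    have h1 : α * ‖T x‖ ^ 2 ≤ ⟪G x, x⟫ := by rw [hGinner]; exact hB (T x)
    have h2 : ⟪G x, x⟫ ≤ ‖G x‖ * ‖x‖ := real_inner_le_norm (G x) x
    have h3 := hTlow x hx
    rcases (norm_nonneg x).eq_or_lt with h | h
    · rw [← h]; simp
    · have hTx : ‖x‖ / C ≤ ‖T x‖ := by
        rw [div_le_iff₀ hCpos] at *
        linarith [h3]
      have h4 : α * (‖x‖ / C) ^ 2 ≤ α * ‖T x‖ ^ 2 := by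
        apply mul_le_mul_of_nonneg_left _ hα.le
        apply pow_le_pow_left₀ (by positivity) hTx
      have h5 : α * (‖x‖ / C) ^ 2 ≤ ‖G x‖ * ‖x‖ := by linarith
      have : (α / C ^ 2) * ‖x‖ * ‖x‖ ≤ ‖G x‖ * ‖x‖ := by
        have : α * (‖x‖ / C) ^ 2 = (α / C ^ 2) * ‖x‖ * ‖x‖ := by
          field_simp
        linarith [this ▸ h5]
      exact le_of_mul_le_mul_right this h
  have hcoer : ∀ x : H, x ∈ K → β * ‖x‖ ^ 2 ≤ ⟪G₂ x, x⟫ := by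
    intro x hx
    rw [hG₂sq]
    have := hGlow x hx
    have h0 : 0 ≤ (α / C ^ 2) * ‖x‖ := by positivity
    rw [hβdef]
    nlinarith
  -- operator-norm Cauchy–Schwarz bound: ‖G₂ x‖² ≤ ‖G₂‖ ⟪G₂ x, x⟫
  have hG₂cs : ∀ x : H, ‖G₂ x‖ ^ 2 ≤ ‖G₂‖ * ⟪G₂ x, x⟫ := by
    intro x
    have hcs := pos_op_cauchy_schwarz G₂ hsymm hpos x (G₂ x)
    have h1 : ⟪G₂ x, G₂ x⟫ = ‖G₂ x‖ ^ 2 := real_inner_self_eq_norm_sq _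
    have h2 : ⟪G₂ (G₂ x), G₂ x⟫ ≤ ‖G₂‖ * ‖G₂ x‖ * ‖G₂ x‖ := by
      calc ⟪G₂ (G₂ x), G₂ x⟫ ≤ ‖G₂ (G₂ x)‖ * ‖G₂ x‖ := real_inner_le_norm _ _
        _ ≤ ‖G₂‖ * ‖G₂ x‖ * ‖G₂ x‖ := by
            apply mul_le_mul_of_nonneg_right (G₂.le_opNorm _) (norm_nonneg _)
    rcases (norm_nonneg (G₂ x)).eq_or_lt with h | h
    · rw [← h]; simp
      exact mul_nonneg (norm_nonneg _) (hpos x)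
    · have h3 := mul_le_mul_of_nonneg_left h2 (hpos x)
      have h4 : ‖G₂ x‖ ^ 2 * ‖G₂ x‖ ^ 2 ≤ (‖G₂‖ * ⟪G₂ x, x⟫) * ‖G₂ x‖ ^ 2 := by nlinarith
      have h5 : (0:ℝ) < ‖G₂ x‖ ^ 2 := by positivity
      exact le_of_mul_le_mul_right h4 h5
  -- β ≤ ‖G₂‖ (K contains a nonzero vector)
  have hβle : β ≤ ‖G₂‖ := by
    obtain ⟨x₀, hx₀⟩ : ∃ x : H, G x ≠ 0 := by
      by_contra h
      push_neg at h
      exact hGne (ContinuousLinearMap.ext fun x => by rw [h x]; rfl)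
    have hGP : G (P x₀) = G x₀ := by
      have h1 : G (x₀ - P x₀) = 0 := hkerG _ (LinearMap.mem_ker.mp (hP x₀).2)
      rw [map_sub] at h1
      exact (sub_eq_zero.mp h1).symm
    have hPne : ‖P x₀‖ ≠ 0 := by
      intro h
      apply hx₀
      rw [← hGP]
      rw [norm_eq_zero] at h
      rw [h, map_zero]
    have hPpos : 0 < ‖P x₀‖ := lt_of_le_of_ne (norm_nonneg _) (Ne.symm hPne)
    have h1 := hcoer (P x₀) (hP x₀).1
    have h2 : ⟪G₂ (P x₀), P x₀⟫ ≤ ‖G₂‖ * ‖P x₀‖ * ‖P x₀‖ := by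
      calc ⟪G₂ (P x₀), P x₀⟫ ≤ ‖G₂ (P x₀)‖ * ‖P x₀‖ := real_inner_le_norm _ _
        _ ≤ ‖G₂‖ * ‖P x₀‖ * ‖P x₀‖ :=
            mul_le_mul_of_nonneg_right (G₂.le_opNorm _) (norm_nonneg _)
    nlinarith [mul_pos hPpos hPpos]
  -- the contraction constant
  set t : ℝ := 1 - αs * (2 - αs * ‖G₂‖) * β with htdef
  have h2pos : (0:ℝ) < 2 - αs * ‖G₂‖ := by linarith
  have hprod : αs * (2 - αs * ‖G₂‖) * β ≤ αs * (2 - αs * ‖G₂‖) * ‖G₂‖ :=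
    mul_le_mul_of_nonneg_left hβle (mul_nonneg hαs.le h2pos.le)
  have ht0 : 0 ≤ t := by
    nlinarith [sq_nonneg (1 - αs * ‖G₂‖)]
  have ht1 : t < 1 := by
    nlinarith [mul_pos (mul_pos hαs h2pos) hβpos]
  set r : ℝ := Real.sqrt t with hrdef
  have hr0 : 0 ≤ r := Real.sqrt_nonneg t
  have hr1 : r < 1 := by
    rw [hrdef, show (1:ℝ) = Real.sqrt 1 by simp]
    exact Real.sqrt_lt_sqrt ht0 ht1
  -- S applied
  have hSapp : ∀ x : H, S x = x - αs • G₂ x := by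
    intro x
    rw [hSdef]
    simp [ContinuousLinearMap.sub_apply]
  -- contraction estimate on K
  have hcontr : ∀ x : H, x ∈ K → ‖S x‖ ≤ r * ‖x‖ := by
    intro x hx
    have hsq : ‖S x‖ ^ 2 ≤ t * ‖x‖ ^ 2 := by
      rw [hSapp]
      rw [norm_sub_sq_real]
      have e0 : ⟪x, αs • G₂ x⟫ = αs * ⟪G₂ x, x⟫ := by
        rw [real_inner_smul_right, real_inner_comm]
      have e0' : ‖αs • G₂ x‖ ^ 2 = αs ^ 2 * ‖G₂ x‖ ^ 2 := by
        rw [norm_smul, Real.norm_eq_abs, abs_of_pos hαs, mul_pow]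
      rw [e0, e0']
      have e1 : αs ^ 2 * ‖G₂ x‖ ^ 2 ≤ αs ^ 2 * (‖G₂‖ * ⟪G₂ x, x⟫) := by
        nlinarith [hG₂cs x, sq_nonneg αs]
      have e2 : (αs * (2 - αs * ‖G₂‖)) * (β * ‖x‖ ^ 2) ≤ (αs * (2 - αs * ‖G₂‖)) * ⟪G₂ x, x⟫ :=
        mul_le_mul_of_nonneg_left (hcoer x hx) (mul_pos hαs h2pos).le
      rw [htdef]
      nlinarith
    calc ‖S x‖ = Real.sqrt (‖S x‖ ^ 2) := (Real.sqrt_sq (norm_nonneg _)).symm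
      _ ≤ Real.sqrt (t * ‖x‖ ^ 2) := Real.sqrt_le_sqrt hsq
      _ = r * ‖x‖ := by
          rw [Real.sqrt_mul ht0, Real.sqrt_sq (norm_nonneg x)]
  -- K is invariant under G₂ and S
  have hG₂K : ∀ x : H, G₂ x ∈ K := by
    intro x
    rw [hK, Submodule.mem_orthogonal]
    intro u hu
    rw [real_inner_comm, hG₂inner x u, hkerG u (LinearMap.mem_ker.mp hu), inner_zero_right]
  have hSK : ∀ x : H, x ∈ K → S x ∈ K := by
    intro x hx
    rw [hSapp]
    exact K.sub_mem hx (K.smul_mem αs (hG₂K x))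
  -- iterates
  have hiter : ∀ n : ℕ, (S ^ n) p ∈ K ∧ ‖(S ^ n) p‖ ≤ r ^ n * ‖p‖ := by
    intro n
    induction n with
    | zero => simpa using (hP ubar).1
    | succ n ih =>
      have happ : (S ^ (n + 1)) p = S ((S ^ n) p) := by
        rw [pow_succ']; rfl
      refine ⟨by rw [happ]; exact hSK _ ih.1, ?_⟩
      rw [happ]
      calc ‖S ((S ^ n) p)‖ ≤ r * ‖(S ^ n) p‖ := hcontr _ ih.1
        _ ≤ r * (r ^ n * ‖p‖) := mul_le_mul_of_nonneg_left ih.2 hr0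
        _ = r ^ (n + 1) * ‖p‖ := by ring
  -- identify the series terms with a telescoping difference
  have hw : ContinuousLinearMap.adjoint G (ContinuousLinearMap.adjoint T f) = G₂ p := by
    rw [← hubar]
    have h1 : G₂ (ubar - p) = 0 := hkerG₂ _ (LinearMap.mem_ker.mp (hP ubar).2)
    rw [map_sub] at h1
    have h2 : G₂ ubar = G₂ p := sub_eq_zero.mp h1
    calc ContinuousLinearMap.adjoint G (G ubar) = G₂ ubar := by rw [hG₂]; rfl
      _ = G₂ p := h2
  have hterm : ∀ n : ℕ,
      αs • ((S ^ n) (ContinuousLinearMap.adjoint G (ContinuousLinearMap.adjoint T f)))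
        = (S ^ n) p - (S ^ (n + 1)) p := by
    intro n
    rw [hw]
    have h1 : (S ^ (n + 1)) p = (S ^ n) (S p) := by rw [pow_succ]; rfl
    have h2 : p - S p = αs • G₂ p := by
      rw [hSapp]; abel
    rw [h1, ← map_sub, h2, map_smul]
  -- summability of the norms
  have hnorm : Summable (fun n : ℕ => ‖(S ^ n) p - (S ^ (n + 1)) p‖) := by
    apply Summable.of_nonneg_of_le (fun n => norm_nonneg _) (fun n => ?_)
      ((summable_geometric_of_lt_one hr0 hr1).mul_left ((1 + r) * ‖p‖))
    calc ‖(S ^ n) p - (S ^ (n + 1)) p‖ ≤ ‖(S ^ n) p‖ + ‖(S ^ (n + 1)) p‖ := norm_sub_le _ _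
      _ ≤ r ^ n * ‖p‖ + r ^ (n + 1) * ‖p‖ := add_le_add (hiter n).2 (hiter (n + 1)).2
      _ ≤ (1 + r) * ‖p‖ * r ^ n := by
          have hrn : (0:ℝ) ≤ r ^ n := pow_nonneg hr0 n
          have : r ^ (n + 1) = r * r ^ n := by ring
          nlinarith [norm_nonneg p]
  -- conclude via telescoping partial sums
  rw [show (fun n : ℕ => αs • ((S ^ n)
      (ContinuousLinearMap.adjoint G (ContinuousLinearMap.adjoint T f))))
      = fun n => (S ^ n) p - (S ^ (n + 1)) p from funext hterm]
  apply (hasSum_iff_tendsto_nat_of_summable_norm hnorm).mpr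
  have hps : (fun N => ∑ i ∈ Finset.range N, ((S ^ i) p - (S ^ (i + 1)) p))
      = fun N => p - (S ^ N) p := by
    funext N
    rw [Finset.sum_range_sub' (fun i => (S ^ i) p)]
    simp
  rw [hps]
  have hz : Tendsto (fun N : ℕ => (S ^ N) p) atTop (nhds 0) := by
    rw [tendsto_zero_iff_norm_tendsto_zero]
    apply squeeze_zero (fun n => norm_nonneg _) (fun n => (hiter n).2)
    have h := (tendsto_pow_atTop_nhds_zero_of_lt_one hr0 hr1).mul_const ‖p‖
    simpa using h
  have hfin : Tendsto (fun N : ℕ => p - (S ^ N) p) atTop (nhds (p - 0)) :=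
    tendsto_const_nhds.sub hz
  simpa using hfin
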